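/- Let k ≥ 0 be an integer, let n = 18k + 9 and s = n − 9. Then HOP(2^⟨s⟩, 4, 6, 8) has a solution, i.e., HOP(2^⟨s⟩, 2m_1, 2m_2, 2m_3) has a solution with (m_1, m_2, m_3) = (2, 3, 4). (In the paper this is stated as: 4K_n^• admits an HOP (C_2, C_3, C_4)-decomposition, which by the paper's Theorem 3.2 is equivalent to the stated HOP solution.) -/

import Mathlib

/-- The vertex set of the complete graph `K_{2n}`: the `n` couples are indexed by `Fin n`,
and the two members of a couple by `Fin 2`. -/
abbrev HOPVertex (n : ℕ) : Type := Fin n × Fin 2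

/-- The spouse of a participant: the other member of the same couple. -/
def HOPspouse {n : ℕ} (v : HOPVertex n) : HOPVertex n := (v.1, v.2 + 1)

/-- An edge of `K_{2n}` is an `I`-edge (an edge of the distinguished perfect matching `I`)
if it joins a participant to their spouse. -/
def IsIEdge {n : ℕ} (e : Sym2 (HOPVertex n)) : Prop :=
  ∃ v, e = s(v, HOPspouse v)

/-- An `I`-alternating `(K_2^⟨s⟩, C_{2m_1}, …, C_{2m_t})`-factor of `K_{2n}`:
a spanning subgraph of `K_{2n}` which is a vertex-disjoint union of `s` edges of `I`
(one for each `a : Fin s`, namely the edge joining `pair a` to its spouse) together with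
`t` cycles, the `i`-th of which has length `2 * m i` (given by the cyclic vertex sequence
`cyc i : ZMod (2 * m i) → HOPVertex n`), such that along each cycle the edges alternate
between `I`-edges (at even positions) and non-`I`-edges (at odd positions).
The field `spanning` says that the listed vertices are pairwise distinct and exhaust the
whole vertex set; in particular each `cyc i` is injective, so it really traces a cycle. -/
structure HOPFactor (n s t : ℕ) (m : Fin t → ℕ) : Type where
  pair : Fin s → HOPVertex n
  cyc : (i : Fin t) → ZMod (2 * m i) → HOPVertex n
  alt_even : ∀ (i : Fin t) (j : ZMod (2 * m i)),
      j.val % 2 = 0 → cyc i (j + 1) = HOPspouse (cyc i j)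
  alt_odd : ∀ (i : Fin t) (j : ZMod (2 * m i)),
      j.val % 2 = 1 → ¬ IsIEdge s(cyc i j, cyc i (j + 1))
  spanning : Function.Bijective
      (Sum.elim
        (fun a : Fin s × Fin 2 => if a.2 = 0 then pair a.1 else HOPspouse (pair a.1))
        (fun x : (i : Fin t) × ZMod (2 * m i) => cyc x.1 x.2))

/-- The edge set of an `I`-alternating `(K_2^⟨s⟩, C_{2m_1}, …, C_{2m_t})`-factor. -/
def HOPFactor.edges {n s t : ℕ} {m : Fin t → ℕ} (F : HOPFactor n s t m) :
    Set (Sym2 (HOPVertex n)) :=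
  {e | (∃ a : Fin s, e = s(F.pair a, HOPspouse (F.pair a))) ∨
    ∃ (i : Fin t) (j : ZMod (2 * m i)), e = s(F.cyc i j, F.cyc i (j + 1))}

/-- A solution to the generalized Honeymoon Oberwolfach Problem
`HOP(2^⟨s⟩, 2 m_1, …, 2 m_t)`: a family of `γ` `I`-alternating
`(K_2^⟨s⟩, C_{2m_1}, …, C_{2m_t})`-factors of `K_{2n}`, where `γ` is the natural number
with `γ * (m_1 + ⋯ + m_t) = 2n(n-1)`, such that every edge of `K_{2n}` that is not an
`I`-edge lies in exactly one factor of the family. -/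
def HOPSolution (n s t : ℕ) (m : Fin t → ℕ) : Prop :=
  ∃ γ : ℕ, γ * (∑ i, m i) = 2 * n * (n - 1) ∧
    ∃ F : Fin γ → HOPFactor n s t m,
      ∀ e : Sym2 (HOPVertex n), ¬ e.IsDiag → ¬ IsIEdge e →
        ∃! k : Fin γ, e ∈ (F k).edges

namespace HOPAux

lemma isIEdge_spouse {n : ℕ} (v : HOPVertex n) : IsIEdge s(v, HOPspouse v) := ⟨v, rfl⟩

lemma not_isIEdge {n : ℕ} {p q : Fin n} {x y : Fin 2} (h : p ≠ q) :
    ¬ IsIEdge s((p,x),(q,y)) := by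
  rintro ⟨v, hv⟩
  rw [Sym2.eq_iff] at hv
  rcases hv with ⟨h1, h2⟩ | ⟨h1, h2⟩ <;>
    exact h ((congrArg Prod.fst h1).trans (congrArg Prod.fst h2).symm)

def slotV : Fin 9 → Fin 9 := ![1,0,3,4,2,6,7,8,5]

structure HB (n : ℕ) where
  c : Fin 9 → Fin n
  e : Fin 9 → Fin 2
  inj : Function.Injective c

variable {n : ℕ}

def HB.pt (b : HB n) (i : ℕ) (x : Fin 2) : HOPVertex n :=
  (b.c ⟨i % 9, Nat.mod_lt _ (by norm_num)⟩, b.e ⟨i % 9, Nat.mod_lt _ (by norm_num)⟩ + x)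

def HB.cyc (b : HB n) : (i : Fin 3) → ZMod (2 * ![2,3,4] i) → HOPVertex n
  | ⟨0, _⟩ => fun j : ZMod 4 => b.pt (j.val / 2) ⟨j.val % 2, Nat.mod_lt _ (by norm_num)⟩
  | ⟨1, _⟩ => fun j : ZMod 6 => b.pt (2 + j.val / 2) ⟨j.val % 2, Nat.mod_lt _ (by norm_num)⟩
  | ⟨2, _⟩ => fun j : ZMod 8 => b.pt (5 + j.val / 2) ⟨j.val % 2, Nat.mod_lt _ (by norm_num)⟩

lemma HB.pt_eq_of (b : HB n) {i1 i2 : ℕ} {x1 x2 : Fin 2} (h : i1 % 9 = i2 % 9) (hx : x1 = x2) :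
    b.pt i1 x1 = b.pt i2 x2 := by
  have h9 : (⟨i1 % 9, Nat.mod_lt _ (by norm_num)⟩ : Fin 9) = ⟨i2 % 9, Nat.mod_lt _ (by norm_num)⟩ :=
    Fin.ext h
  simp only [HB.pt, h9, hx]

lemma HB.pt_spouse (b : HB n) {i1 i2 : ℕ} {x1 x2 : Fin 2} (h : i1 % 9 = i2 % 9)
    (hx : x1 = x2 + 1) : b.pt i1 x1 = HOPspouse (b.pt i2 x2) := by
  simp only [HB.pt, HOPspouse]
  subst hx
  have h9 : (⟨i1 % 9, Nat.mod_lt _ (by norm_num)⟩ : Fin 9) = ⟨i2 % 9, Nat.mod_lt _ (by norm_num)⟩ :=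
    Fin.ext h
  rw [h9, add_assoc]

lemma HB.pt_not_IEdge (b : HB n) {i1 i2 : ℕ} (h : i1 % 9 ≠ i2 % 9) (x1 x2 : Fin 2) :
    ¬ IsIEdge s(b.pt i1 x1, b.pt i2 x2) := by
  apply not_isIEdge
  intro hc
  exact h (congrArg Fin.val (b.inj hc))

lemma fin2cases (x : Fin 2) : x = 0 ∨ x = 1 := by omega

-- alternation lemmas, cycle of ZMod 4 at offset 0
lemma HB.ae4 (b : HB n) (j : ZMod 4) (h : j.val % 2 = 0) :
    b.pt ((j+1).val / 2) ⟨(j+1).val % 2, Nat.mod_lt _ (by norm_num)⟩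
      = HOPspouse (b.pt (j.val / 2) ⟨j.val % 2, Nat.mod_lt _ (by norm_num)⟩) := by
  have hv : j.val < 4 := (show ∀ j : ZMod 4, j.val < 4 by decide) j
  have ha : (j+1).val = (j.val + 1) % 4 := (show ∀ j : ZMod 4, (j+1).val = (j.val+1)%4 by decide) j
  exact b.pt_spouse (by omega) (by apply Fin.ext; simp [Fin.val_add]; omega)

lemma HB.ao4 (b : HB n) (j : ZMod 4) (h : j.val % 2 = 1) :
    ¬ IsIEdge s(b.pt (j.val / 2) ⟨j.val % 2, Nat.mod_lt _ (by norm_num)⟩,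
        b.pt ((j+1).val / 2) ⟨(j+1).val % 2, Nat.mod_lt _ (by norm_num)⟩) := by
  have hv : j.val < 4 := (show ∀ j : ZMod 4, j.val < 4 by decide) j
  have ha : (j+1).val = (j.val + 1) % 4 := (show ∀ j : ZMod 4, (j+1).val = (j.val+1)%4 by decide) j
  exact b.pt_not_IEdge (by omega) _ _

lemma HB.ae6 (b : HB n) (j : ZMod 6) (h : j.val % 2 = 0) :
    b.pt (2 + (j+1).val / 2) ⟨(j+1).val % 2, Nat.mod_lt _ (by norm_num)⟩
      = HOPspouse (b.pt (2 + j.val / 2) ⟨j.val % 2, Nat.mod_lt _ (by norm_num)⟩) := by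
  have hv : j.val < 6 := (show ∀ j : ZMod 6, j.val < 6 by decide) j
  have ha : (j+1).val = (j.val + 1) % 6 := (show ∀ j : ZMod 6, (j+1).val = (j.val+1)%6 by decide) j
  exact b.pt_spouse (by omega) (by apply Fin.ext; simp [Fin.val_add]; omega)

lemma HB.ao6 (b : HB n) (j : ZMod 6) (h : j.val % 2 = 1) :
    ¬ IsIEdge s(b.pt (2 + j.val / 2) ⟨j.val % 2, Nat.mod_lt _ (by norm_num)⟩,
        b.pt (2 + (j+1).val / 2) ⟨(j+1).val % 2, Nat.mod_lt _ (by norm_num)⟩) := by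
  have hv : j.val < 6 := (show ∀ j : ZMod 6, j.val < 6 by decide) j
  have ha : (j+1).val = (j.val + 1) % 6 := (show ∀ j : ZMod 6, (j+1).val = (j.val+1)%6 by decide) j
  exact b.pt_not_IEdge (by omega) _ _

lemma HB.ae8 (b : HB n) (j : ZMod 8) (h : j.val % 2 = 0) :
    b.pt (5 + (j+1).val / 2) ⟨(j+1).val % 2, Nat.mod_lt _ (by norm_num)⟩
      = HOPspouse (b.pt (5 + j.val / 2) ⟨j.val % 2, Nat.mod_lt _ (by norm_num)⟩) := by
  have hv : j.val < 8 := (show ∀ j : ZMod 8, j.val < 8 by decide) j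
  have ha : (j+1).val = (j.val + 1) % 8 := (show ∀ j : ZMod 8, (j+1).val = (j.val+1)%8 by decide) j
  exact b.pt_spouse (by omega) (by apply Fin.ext; simp [Fin.val_add]; omega)

lemma HB.ao8 (b : HB n) (j : ZMod 8) (h : j.val % 2 = 1) :
    ¬ IsIEdge s(b.pt (5 + j.val / 2) ⟨j.val % 2, Nat.mod_lt _ (by norm_num)⟩,
        b.pt (5 + (j+1).val / 2) ⟨(j+1).val % 2, Nat.mod_lt _ (by norm_num)⟩) := by
  have hv : j.val < 8 := (show ∀ j : ZMod 8, j.val < 8 by decide) j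
  have ha : (j+1).val = (j.val + 1) % 8 := (show ∀ j : ZMod 8, (j+1).val = (j.val+1)%8 by decide) j
  exact b.pt_not_IEdge (by omega) _ _

instance inst2m : ∀ i : Fin 3, NeZero (2 * ![2,3,4] i) := fun i => by
  fin_cases i <;> exact ⟨by norm_num⟩

lemma HB.pt_val (b : HB n) (i : ℕ) (x : Fin 2) (s : Fin 9) (h : i % 9 = s.val) :
    b.pt i x = (b.c s, b.e s + x) := by
  have h9 : (⟨i % 9, Nat.mod_lt _ (by norm_num)⟩ : Fin 9) = s := Fin.ext h
  simp only [HB.pt, h9]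

lemma fin2add_sub : ∀ a c : Fin 2, a + (c - a) = c := by decide

lemma HB.hit4 (b : HB n) (s : Fin 9) (x : Fin 2) (h2 : s.val < 2) :
    (fun j : ZMod 4 => b.pt (j.val / 2) ⟨j.val % 2, Nat.mod_lt _ (by norm_num)⟩)
      ((2 * s.val + (x - b.e s).val : ℕ) : ZMod 4) = (b.c s, x) := by
  have hd : (x - b.e s).val < 2 := (x - b.e s).isLt
  simp only
  have hv : ((2 * s.val + (x - b.e s).val : ℕ) : ZMod 4).val
      = 2 * s.val + (x - b.e s).val := by rw [ZMod.val_natCast]; omega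
  rw [hv, b.pt_val _ _ s (by omega)]
  have hx2 : (⟨(2 * s.val + (x - b.e s).val) % 2, Nat.mod_lt _ (by norm_num)⟩ : Fin 2)
      = x - b.e s := by apply Fin.ext; simp; omega
  rw [hx2, fin2add_sub]

lemma HB.hit6 (b : HB n) (s : Fin 9) (x : Fin 2) (h2 : 2 ≤ s.val) (h5 : s.val < 5) :
    (fun j : ZMod 6 => b.pt (2 + j.val / 2) ⟨j.val % 2, Nat.mod_lt _ (by norm_num)⟩)
      ((2 * (s.val - 2) + (x - b.e s).val : ℕ) : ZMod 6) = (b.c s, x) := by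
  have hd : (x - b.e s).val < 2 := (x - b.e s).isLt
  have hs := s.isLt
  simp only
  have hv : ((2 * (s.val - 2) + (x - b.e s).val : ℕ) : ZMod 6).val
      = 2 * (s.val - 2) + (x - b.e s).val := by rw [ZMod.val_natCast]; omega
  rw [hv, b.pt_val _ _ s (by omega)]
  have hx2 : (⟨(2 * (s.val - 2) + (x - b.e s).val) % 2, Nat.mod_lt _ (by norm_num)⟩ : Fin 2)
      = x - b.e s := by apply Fin.ext; simp; omega
  rw [hx2, fin2add_sub]

lemma HB.hit8 (b : HB n) (s : Fin 9) (x : Fin 2) (h5 : 5 ≤ s.val) :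
    (fun j : ZMod 8 => b.pt (5 + j.val / 2) ⟨j.val % 2, Nat.mod_lt _ (by norm_num)⟩)
      ((2 * (s.val - 5) + (x - b.e s).val : ℕ) : ZMod 8) = (b.c s, x) := by
  have hd : (x - b.e s).val < 2 := (x - b.e s).isLt
  have hs := s.isLt
  simp only
  have hv : ((2 * (s.val - 5) + (x - b.e s).val : ℕ) : ZMod 8).val
      = 2 * (s.val - 5) + (x - b.e s).val := by rw [ZMod.val_natCast]; omega
  rw [hv, b.pt_val _ _ s (by omega)]
  have hx2 : (⟨(2 * (s.val - 5) + (x - b.e s).val) % 2, Nat.mod_lt _ (by norm_num)⟩ : Fin 2)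
      = x - b.e s := by apply Fin.ext; simp; omega
  rw [hx2, fin2add_sub]

lemma HB.cyc_hits (b : HB n) (s : Fin 9) (x : Fin 2) :
    ∃ g : (i : Fin 3) × ZMod (2 * ![2,3,4] i), b.cyc g.1 g.2 = (b.c s, x) := by
  have hs := s.isLt
  rcases Nat.lt_or_ge s.val 2 with h2 | h2
  · exact ⟨⟨(0 : Fin 3), ((2 * s.val + (x - b.e s).val : ℕ) : ZMod 4)⟩, b.hit4 s x h2⟩
  rcases Nat.lt_or_ge s.val 5 with h5 | h5
  · exact ⟨⟨(1 : Fin 3), ((2 * (s.val - 2) + (x - b.e s).val : ℕ) : ZMod 6)⟩, b.hit6 s x h2 h5⟩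
  · exact ⟨⟨(2 : Fin 3), ((2 * (s.val - 5) + (x - b.e s).val : ℕ) : ZMod 8)⟩, b.hit8 s x h5⟩

def HB.S (b : HB n) : Finset (Fin n) := Finset.univ.image b.c

lemma HB.card_Sc (b : HB n) (h9 : 9 ≤ n) : (b.Sᶜ).card = n - 9 := by
  rw [Finset.card_compl]
  have : b.S.card = 9 := by
    rw [HB.S, Finset.card_image_of_injective _ b.inj]; simp
  simp [this]

noncomputable def HB.pairE (b : HB n) (h9 : 9 ≤ n) : Fin (n-9) ≃ {v // v ∈ b.Sᶜ} :=
  (finCongr (b.card_Sc h9).symm).trans (b.Sᶜ).equivFin.symm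

noncomputable def HB.toFactor (b : HB n) (h9 : 9 ≤ n) : HOPFactor n (n-9) 3 ![2,3,4] where
  pair := fun a => (((b.pairE h9) a : Fin n), 0)
  cyc := b.cyc
  alt_even := fun i => match i with
    | ⟨0,_⟩ => fun j h => b.ae4 j h
    | ⟨1,_⟩ => fun j h => b.ae6 j h
    | ⟨2,_⟩ => fun j h => b.ae8 j h
  alt_odd := fun i => match i with
    | ⟨0,_⟩ => fun j h => b.ao4 j h
    | ⟨1,_⟩ => fun j h => b.ao6 j h
    | ⟨2,_⟩ => fun j h => b.ao8 j h
  spanning := by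
    rw [Fintype.bijective_iff_surjective_and_card]
    constructor
    · rintro ⟨p, x⟩
      by_cases hp : p ∈ b.S
      · rw [HB.S, Finset.mem_image] at hp
        obtain ⟨s, -, hcs⟩ := hp
        obtain ⟨g, hg⟩ := b.cyc_hits s x
        exact ⟨Sum.inr g, by simp [hg, hcs]⟩
      · have hpc : p ∈ b.Sᶜ := Finset.mem_compl.mpr hp
        rcases fin2cases x with hx | hx
        · refine ⟨Sum.inl ((b.pairE h9).symm ⟨p, hpc⟩, 0), ?_⟩
          simp [hx]
        · refine ⟨Sum.inl ((b.pairE h9).symm ⟨p, hpc⟩, 1), ?_⟩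
          simp [hx, HOPspouse]
    · have hsig : Fintype.card ((i : Fin 3) × ZMod (2 * ![2,3,4] i)) = 18 := by
        rw [Fintype.card_sigma, Fin.sum_univ_three]
        norm_num
        rfl
      simp only [Fintype.card_sum, Fintype.card_prod, Fintype.card_fin, hsig]
      omega

def HB.src (b : HB n) (s : Fin 9) : HOPVertex n := (b.c s, b.e s + 1)
def HB.dst (b : HB n) (s : Fin 9) : HOPVertex n := (b.c (slotV s), b.e (slotV s) + 0)

lemma HB.mem_edges_iff (b : HB n) (h9 : 9 ≤ n) {u v : HOPVertex n} (huv : u.1 ≠ v.1) :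
    s(u,v) ∈ (b.toFactor h9).edges ↔ ∃ s : Fin 9, s(u,v) = s(b.src s, b.dst s) := by
  have hnotI : ¬ IsIEdge s(u,v) := by
    have := not_isIEdge (p := u.1) (q := v.1) (x := u.2) (y := v.2) huv
    simpa using this
  constructor
  · rintro (⟨a, ha⟩ | ⟨i, j, he⟩)
    · exact absurd (by rw [ha]; exact isIEdge_spouse _) hnotI
    · rcases i with ⟨iv, hlt⟩
      interval_cases iv
      · change s(u,v) = s(b.pt (j.val/2) ⟨j.val % 2, Nat.mod_lt _ (by norm_num)⟩,
          b.pt ((j+1).val/2) ⟨(j+1).val % 2, Nat.mod_lt _ (by norm_num)⟩) at he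
        have hv : j.val < 4 := (show ∀ j : ZMod 4, j.val < 4 by decide) j
        rcases Nat.even_or_odd j.val with hpar | hpar
        · have hp : j.val % 2 = 0 := Nat.even_iff.mp hpar
          refine absurd ?_ hnotI
          rw [he]
          exact (congrArg (fun w => IsIEdge s(b.pt (j.val / 2) ⟨j.val % 2, Nat.mod_lt _ (by norm_num)⟩, w)) (b.ae4 j hp)).mpr (isIEdge_spouse _)
        · have hp : j.val % 2 = 1 := Nat.odd_iff.mp hpar
          have ha : (j+1).val = (j.val+1)%4 :=
            (show ∀ j : ZMod 4, (j+1).val = (j.val+1)%4 by decide) j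
          rw [ha] at he
          have hjv : j.val = 1 ∨ j.val = 3 := by omega
          rcases hjv with hjv | hjv <;> rw [hjv] at he
          · exact ⟨0, he⟩
          · exact ⟨1, he⟩
      · change s(u,v) = s(b.pt (2 + j.val/2) ⟨j.val % 2, Nat.mod_lt _ (by norm_num)⟩,
          b.pt (2 + (j+1).val/2) ⟨(j+1).val % 2, Nat.mod_lt _ (by norm_num)⟩) at he
        have hv : j.val < 6 := (show ∀ j : ZMod 6, j.val < 6 by decide) j
        rcases Nat.even_or_odd j.val with hpar | hpar
        · have hp : j.val % 2 = 0 := Nat.even_iff.mp hpar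
          refine absurd ?_ hnotI
          rw [he]
          exact (congrArg (fun w => IsIEdge s(b.pt (2 + j.val / 2) ⟨j.val % 2, Nat.mod_lt _ (by norm_num)⟩, w)) (b.ae6 j hp)).mpr (isIEdge_spouse _)
        · have hp : j.val % 2 = 1 := Nat.odd_iff.mp hpar
          have ha : (j+1).val = (j.val+1)%6 :=
            (show ∀ j : ZMod 6, (j+1).val = (j.val+1)%6 by decide) j
          rw [ha] at he
          have hjv : j.val = 1 ∨ j.val = 3 ∨ j.val = 5 := by omega
          rcases hjv with hjv | hjv | hjv <;> rw [hjv] at he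
          · exact ⟨2, he⟩
          · exact ⟨3, he⟩
          · exact ⟨4, he⟩
      · change s(u,v) = s(b.pt (5 + j.val/2) ⟨j.val % 2, Nat.mod_lt _ (by norm_num)⟩,
          b.pt (5 + (j+1).val/2) ⟨(j+1).val % 2, Nat.mod_lt _ (by norm_num)⟩) at he
        have hv : j.val < 8 := (show ∀ j : ZMod 8, j.val < 8 by decide) j
        rcases Nat.even_or_odd j.val with hpar | hpar
        · have hp : j.val % 2 = 0 := Nat.even_iff.mp hpar
          refine absurd ?_ hnotI
          rw [he]
          exact (congrArg (fun w => IsIEdge s(b.pt (5 + j.val / 2) ⟨j.val % 2, Nat.mod_lt _ (by norm_num)⟩, w)) (b.ae8 j hp)).mpr (isIEdge_spouse _)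
        · have hp : j.val % 2 = 1 := Nat.odd_iff.mp hpar
          have ha : (j+1).val = (j.val+1)%8 :=
            (show ∀ j : ZMod 8, (j+1).val = (j.val+1)%8 by decide) j
          rw [ha] at he
          have hjv : j.val = 1 ∨ j.val = 3 ∨ j.val = 5 ∨ j.val = 7 := by omega
          rcases hjv with hjv | hjv | hjv | hjv <;> rw [hjv] at he
          · exact ⟨5, he⟩
          · exact ⟨6, he⟩
          · exact ⟨7, he⟩
          · exact ⟨8, he⟩
  · rintro ⟨s, hs⟩
    refine Or.inr ?_
    fin_cases s
    · exact ⟨0, 1, hs⟩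
    · exact ⟨0, 3, hs⟩
    · exact ⟨1, 1, hs⟩
    · exact ⟨1, 3, hs⟩
    · exact ⟨1, 5, hs⟩
    · exact ⟨2, 1, hs⟩
    · exact ⟨2, 3, hs⟩
    · exact ⟨2, 5, hs⟩
    · exact ⟨2, 7, hs⟩

def T9C : Fin 16 → Fin 9 → Fin 9 :=
  ![![2,6,3,7,8,0,1,4,5],
   ![3,7,0,1,2,4,5,6,8],
   ![4,7,3,6,8,0,2,1,5],
   ![6,7,0,2,8,1,3,5,4],
   ![1,8,0,3,4,2,6,5,7],
   ![0,8,1,5,7,2,4,3,6],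
   ![0,7,1,5,6,2,4,3,8],
   ![6,8,1,3,5,0,2,7,4],
   ![0,3,5,6,7,1,4,2,8],
   ![0,6,3,5,7,1,4,2,8],
   ![2,5,0,1,3,4,6,7,8],
   ![1,7,0,4,6,2,3,8,5],
   ![2,3,0,5,8,1,6,4,7],
   ![1,2,3,4,6,0,5,8,7],
   ![2,7,4,5,8,0,1,3,6],
   ![1,6,2,3,5,0,4,8,7]]

def T9E : Fin 16 → Fin 9 → Fin 2 :=
  ![![0,0,1,1,1,1,0,0,1],
   ![0,1,0,1,1,0,0,1,1],
   ![0,1,1,0,0,0,1,1,0],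
   ![0,0,1,1,0,0,0,1,0],
   ![0,0,0,1,1,0,1,0,0],
   ![0,0,0,0,1,0,1,1,1],
   ![0,0,1,1,1,1,0,1,0],
   ![0,1,1,1,0,0,0,0,0],
   ![0,0,0,0,1,1,0,0,0],
   ![0,0,1,1,1,0,1,1,1],
   ![0,1,0,0,1,0,1,0,0],
   ![0,0,0,1,1,1,1,1,1],
   ![0,1,0,1,1,1,1,0,0],
   ![0,1,1,0,0,1,0,1,0],
   ![0,1,1,1,0,1,1,0,0],
   ![0,1,0,0,0,0,0,0,1]]

lemma t9c_inj : ∀ f, Function.Injective (T9C f) := by decide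

lemma t9_exists : ∀ a b : Fin 9, a ≠ b → ∀ x y : Fin 2, ∃ f s,
    (a = T9C f s ∧ b = T9C f (slotV s) ∧ x = T9E f s + 1 ∧ y = T9E f (slotV s) + 0) ∨
    (b = T9C f s ∧ a = T9C f (slotV s) ∧ y = T9E f s + 1 ∧ x = T9E f (slotV s) + 0) := by decide

def HB.quad (b : HB n) (s : Fin 9) (o : Bool) : (Fin n × Fin n) × (Fin 2 × Fin 2) :=
  if o then (((b.dst s).1, (b.src s).1), ((b.dst s).2, (b.src s).2))
  else (((b.src s).1, (b.dst s).1), ((b.src s).2, (b.dst s).2))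

lemma HB.quad_flip (b : HB n) (s : Fin 9) (o : Bool) {p q : Fin n} {x y : Fin 2}
    (h : b.quad s o = ((q,p),(y,x))) : b.quad s (!o) = ((p,q),(x,y)) := by
  cases o <;> simp [HB.quad, Prod.ext_iff] at h ⊢ <;> tauto

lemma HB.sym2_eq_iff_quad (b : HB n) {p q : Fin n} {x y : Fin 2} (s : Fin 9) :
    s(((p,x) : HOPVertex n), (q,y)) = s(b.src s, b.dst s) ↔
      ∃ o : Bool, b.quad s o = ((p,q),(x,y)) := by
  rw [Sym2.eq_iff]
  constructor
  · rintro (⟨h1, h2⟩ | ⟨h1, h2⟩)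
    · refine ⟨false, ?_⟩
      show (((b.src s).1, (b.dst s).1), ((b.src s).2, (b.dst s).2)) = ((p,q),(x,y))
      rw [← h1, ← h2]
    · refine ⟨true, ?_⟩
      show (((b.dst s).1, (b.src s).1), ((b.dst s).2, (b.src s).2)) = ((p,q),(x,y))
      rw [← h1, ← h2]
  · rintro ⟨o, ho⟩
    cases o
    · exact Or.inl ⟨(congrArg (fun z => ((z.1.1, z.2.1) : HOPVertex n)) ho).symm,
        (congrArg (fun z => ((z.1.2, z.2.2) : HOPVertex n)) ho).symm⟩
    · exact Or.inr ⟨(congrArg (fun z => ((z.1.1, z.2.1) : HOPVertex n)) ho).symm,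
        (congrArg (fun z => ((z.1.2, z.2.2) : HOPVertex n)) ho).symm⟩

instance instNZhop (k : ℕ) : NeZero (18*k+9) := ⟨by omega⟩

def zf (k : ℕ) (z : ZMod (18*k+9)) : Fin (18*k+9) := ⟨z.val, z.val_lt⟩

lemma cast_val_hop (k : ℕ) (z : ZMod (18*k+9)) : ((z.val : ℕ) : ZMod (18*k+9)) = z :=
  (ZMod.natCast_val z).trans (ZMod.cast_id _ z)

lemma zf_cast (k : ℕ) (r : Fin (18*k+9)) : zf k ((r.val : ℕ) : ZMod (18*k+9)) = r :=
  Fin.ext (ZMod.val_cast_of_lt r.isLt)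

def gcf (k : ℕ) (g : Fin (2*k+1)) (f : Fin 16) (s : Fin 9) : Fin (18*k+9) :=
  ⟨g.val + (2*k+1) * (T9C f s).val, by
    have h1 := g.isLt
    have h2 : (2*k+1) * (T9C f s).val ≤ (2*k+1) * 8 :=
      Nat.mul_le_mul_left _ (by omega)
    have h3 : (2*k+1) * 8 = 16*k+8 := by ring
    omega⟩

lemma gcf_val (k : ℕ) (g : Fin (2*k+1)) (f : Fin 16) (s : Fin 9) :
    (gcf k g f s).val = g.val + (2*k+1) * (T9C f s).val := rfl

def gBlock (k : ℕ) (g : Fin (2*k+1)) (f : Fin 16) : HB (18*k+9) where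
  c := gcf k g f
  e := T9E f
  inj := by
    intro s t h
    have hval : g.val + (2*k+1) * (T9C f s).val = g.val + (2*k+1) * (T9C f t).val := by
      rw [← gcf_val, ← gcf_val, h]
    have h2 : (T9C f s).val = (T9C f t).val :=
      Nat.eq_of_mul_eq_mul_left (show 0 < 2*k+1 by omega) (by omega)
    exact t9c_inj f (Fin.ext h2)

def rbA (k j : ℕ) (s : Fin 9) : ℕ :=
  if s.val = 0 then 12*k+4
  else if s.val = 1 then 12*k+3+2*j
  else if s.val = 2 then 0
  else if s.val = 3 then 2*j
  else if s.val = 4 then 8*k+4+j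
  else if s.val = 5 then 2*k+1
  else if s.val = 6 then 4*k+2*j+1
  else if s.val = 7 then 8*k+4*j+3
  else 6*k+2*j+2

def rbB (k j : ℕ) (s : Fin 9) : ℕ :=
  if s.val = 0 then 18*k+8
  else if s.val = 1 then 6*k+2+j
  else if s.val = 2 then 0
  else if s.val = 3 then 2*j
  else if s.val = 4 then 8*k+4+j
  else if s.val = 5 then 2*k+1
  else if s.val = 6 then 4*k+2*j+1
  else if s.val = 7 then 8*k+4*j+3
  else 6*k+2*j+2

def rb (k j : ℕ) (idx : Fin 4) (s : Fin 9) : ℕ :=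
  if idx.val < 2 then rbA k j s else rbB k j s

def rE : Fin 4 → Fin 9 → Fin 2 :=
  ![![0,0,0,0,0,0,0,0,0],![1,0,1,1,0,1,1,1,1],![0,0,0,1,1,0,1,0,1],![1,0,1,0,1,1,0,1,0]]

lemma rb_lt (k j : ℕ) (hj1 : 1 ≤ j) (hjk : j ≤ k) (idx : Fin 4) (s : Fin 9) :
    rb k j idx s < 18*k+9 := by
  rcases Nat.lt_or_ge idx.val 2 with hi2 | hi2
  · simp only [rb, if_pos hi2]
    fin_cases s <;> simp [rbA] <;> omega
  · simp only [rb, if_neg (Nat.not_lt.mpr hi2)]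
    fin_cases s <;> simp [rbB] <;> omega

lemma rb_inj (k j : ℕ) (hj1 : 1 ≤ j) (hjk : j ≤ k) (idx : Fin 4) :
    Function.Injective (rb k j idx) := by
  intro s t h
  rcases Nat.lt_or_ge idx.val 2 with hi2 | hi2
  · simp only [rb, if_pos hi2] at h
    fin_cases s <;> fin_cases t <;> first
      | rfl
      | (exfalso; revert h; simp [rbA] <;> omega)
  · simp only [rb, if_neg (Nat.not_lt.mpr hi2)] at h
    fin_cases s <;> fin_cases t <;> first
      | rfl
      | (exfalso; revert h; simp [rbB] <;> omega)

def rcf (k : ℕ) (J : Fin k) (idx : Fin 4) (t : Fin (18*k+9)) (s : Fin 9) : Fin (18*k+9) :=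
  zf k (((t.val + rb k (J.val+1) idx s : ℕ) : ZMod (18*k+9)))

def rBlock (k : ℕ) (J : Fin k) (idx : Fin 4) (t : Fin (18*k+9)) : HB (18*k+9) where
  c := rcf k J idx t
  e := rE idx
  inj := by
    intro s u h
    have hJ := J.isLt
    have h1 : ((t.val + rb k (J.val+1) idx s : ℕ) : ZMod (18*k+9))
        = ((t.val + rb k (J.val+1) idx u : ℕ) : ZMod (18*k+9)) :=
      ZMod.val_injective _ (congrArg Fin.val h)
    have h2 : (t.val + rb k (J.val+1) idx s) ≡ (t.val + rb k (J.val+1) idx u) [MOD 18*k+9] :=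
      (ZMod.natCast_eq_natCast_iff _ _ _).mp h1
    have h3 : rb k (J.val+1) idx s ≡ rb k (J.val+1) idx u [MOD 18*k+9] :=
      Nat.ModEq.add_left_cancel' t.val h2
    have h4 : rb k (J.val+1) idx s = rb k (J.val+1) idx u := by
      have hs := rb_lt k (J.val+1) (by omega) (by omega) idx s
      have hu := rb_lt k (J.val+1) (by omega) (by omega) idx u
      have := h3
      unfold Nat.ModEq at this
      rwa [Nat.mod_eq_of_lt hs, Nat.mod_eq_of_lt hu] at this
    exact rb_inj k (J.val+1) (by omega) (by omega) idx h4

lemma rcf_eq (k : ℕ) (J : Fin k) (idx : Fin 4) (z : ZMod (18*k+9)) (s : Fin 9) :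
    rcf k J idx (zf k z) s = zf k (z + ((rb k (J.val+1) idx s : ℕ) : ZMod (18*k+9))) := by
  unfold rcf
  congr 1
  rw [Nat.cast_add]
  congr 1
  exact cast_val_hop k z

lemma rot_hit_fwd (k : ℕ) {p q : Fin (18*k+9)} {x y : Fin 2} (J : Fin k) (idx : Fin 4)
    (s₀ : Fin 9) (d : ℕ)
    (hPQ : ((q.val : ℕ) : ZMod (18*k+9)) = ((p.val : ℕ) : ZMod (18*k+9)) + (d : ZMod (18*k+9)))
    (hBA : ((rb k (J.val+1) idx (slotV s₀) : ℕ) : ZMod (18*k+9))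
        = ((rb k (J.val+1) idx s₀ : ℕ) : ZMod (18*k+9)) + (d : ZMod (18*k+9)))
    (hx : x = rE idx s₀ + 1) (hy : y = rE idx (slotV s₀) + 0) :
    ∃ t : Fin (18*k+9), (rBlock k J idx t).quad s₀ false = ((p,q),(x,y)) := by
  set A : ZMod (18*k+9) := ((rb k (J.val+1) idx s₀ : ℕ) : ZMod (18*k+9)) with hA
  refine ⟨zf k (((p.val : ℕ) : ZMod (18*k+9)) - A), ?_⟩
  have hc1 : rcf k J idx (zf k (((p.val : ℕ) : ZMod (18*k+9)) - A)) s₀ = p := by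
    rw [rcf_eq, ← hA, sub_add_cancel, zf_cast]
  have hc2 : rcf k J idx (zf k (((p.val : ℕ) : ZMod (18*k+9)) - A)) (slotV s₀) = q := by
    rw [rcf_eq, hBA]
    have : ((p.val : ℕ) : ZMod (18*k+9)) - A + (A + (d : ZMod (18*k+9)))
        = ((p.val : ℕ) : ZMod (18*k+9)) + (d : ZMod (18*k+9)) := by ring
    rw [this, ← hPQ, zf_cast]
  show ((rcf k J idx _ s₀, rcf k J idx _ (slotV s₀)),
      (rE idx s₀ + 1, rE idx (slotV s₀) + 0)) = ((p,q),(x,y))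
  rw [hc1, hc2, hx, hy]

lemma rot_hit_rev (k : ℕ) {p q : Fin (18*k+9)} {x y : Fin 2} (J : Fin k) (idx : Fin 4)
    (s₀ : Fin 9) (d : ℕ)
    (hPQ : ((q.val : ℕ) : ZMod (18*k+9)) = ((p.val : ℕ) : ZMod (18*k+9)) + (d : ZMod (18*k+9)))
    (hAB : ((rb k (J.val+1) idx s₀ : ℕ) : ZMod (18*k+9))
        = ((rb k (J.val+1) idx (slotV s₀) : ℕ) : ZMod (18*k+9)) + (d : ZMod (18*k+9)))
    (hx : x = rE idx (slotV s₀) + 0) (hy : y = rE idx s₀ + 1) :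
    ∃ t : Fin (18*k+9), (rBlock k J idx t).quad s₀ true = ((p,q),(x,y)) := by
  set A : ZMod (18*k+9) := ((rb k (J.val+1) idx (slotV s₀) : ℕ) : ZMod (18*k+9)) with hA
  refine ⟨zf k (((p.val : ℕ) : ZMod (18*k+9)) - A), ?_⟩
  have hc1 : rcf k J idx (zf k (((p.val : ℕ) : ZMod (18*k+9)) - A)) (slotV s₀) = p := by
    rw [rcf_eq, ← hA, sub_add_cancel, zf_cast]
  have hc2 : rcf k J idx (zf k (((p.val : ℕ) : ZMod (18*k+9)) - A)) s₀ = q := by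
    rw [rcf_eq, hAB]
    have : ((p.val : ℕ) : ZMod (18*k+9)) - A + (A + (d : ZMod (18*k+9)))
        = ((p.val : ℕ) : ZMod (18*k+9)) + (d : ZMod (18*k+9)) := by ring
    rw [this, ← hPQ, zf_cast]
  show ((rcf k J idx _ (slotV s₀), rcf k J idx _ s₀),
      (rE idx (slotV s₀) + 0, rE idx s₀ + 1)) = ((p,q),(x,y))
  rw [hc1, hc2, hx, hy]

-- rb evaluation lemmas
lemma rb_e2 (k j : ℕ) (idx : Fin 4) : rb k j idx 2 = 0 := by
  unfold rb
  rcases Nat.lt_or_ge idx.val 2 with h|h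
  · rw [if_pos h]; rfl
  · rw [if_neg (Nat.not_lt.mpr h)]; rfl
lemma rb_e3 (k j : ℕ) (idx : Fin 4) : rb k j idx 3 = 2*j := by
  unfold rb
  rcases Nat.lt_or_ge idx.val 2 with h|h
  · rw [if_pos h]; rfl
  · rw [if_neg (Nat.not_lt.mpr h)]; rfl
lemma rb_e4 (k j : ℕ) (idx : Fin 4) : rb k j idx 4 = 8*k+4+j := by
  unfold rb
  rcases Nat.lt_or_ge idx.val 2 with h|h
  · rw [if_pos h]; rfl
  · rw [if_neg (Nat.not_lt.mpr h)]; rfl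
lemma rb_e5 (k j : ℕ) (idx : Fin 4) : rb k j idx 5 = 2*k+1 := by
  unfold rb
  rcases Nat.lt_or_ge idx.val 2 with h|h
  · rw [if_pos h]; rfl
  · rw [if_neg (Nat.not_lt.mpr h)]; rfl
lemma rb_e6 (k j : ℕ) (idx : Fin 4) : rb k j idx 6 = 4*k+2*j+1 := by
  unfold rb
  rcases Nat.lt_or_ge idx.val 2 with h|h
  · rw [if_pos h]; rfl
  · rw [if_neg (Nat.not_lt.mpr h)]; rfl
lemma rb_e7 (k j : ℕ) (idx : Fin 4) : rb k j idx 7 = 8*k+4*j+3 := by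
  unfold rb
  rcases Nat.lt_or_ge idx.val 2 with h|h
  · rw [if_pos h]; rfl
  · rw [if_neg (Nat.not_lt.mpr h)]; rfl
lemma rb_e8 (k j : ℕ) (idx : Fin 4) : rb k j idx 8 = 6*k+2*j+2 := by
  unfold rb
  rcases Nat.lt_or_ge idx.val 2 with h|h
  · rw [if_pos h]; rfl
  · rw [if_neg (Nat.not_lt.mpr h)]; rfl
lemma rb_e0A (k j : ℕ) (idx : Fin 4) (h : idx.val < 2) : rb k j idx 0 = 12*k+4 := by
  unfold rb; rw [if_pos h]; rfl
lemma rb_e1A (k j : ℕ) (idx : Fin 4) (h : idx.val < 2) : rb k j idx 1 = 12*k+3+2*j := by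
  unfold rb; rw [if_pos h]; rfl
lemma rb_e0B (k j : ℕ) (idx : Fin 4) (h : 2 ≤ idx.val) : rb k j idx 0 = 18*k+8 := by
  unfold rb; rw [if_neg (Nat.not_lt.mpr h)]; rfl
lemma rb_e1B (k j : ℕ) (idx : Fin 4) (h : 2 ≤ idx.val) : rb k j idx 1 = 6*k+2+j := by
  unfold rb; rw [if_neg (Nat.not_lt.mpr h)]; rfl

lemma cast_eq_of_nat (k : ℕ) {a b d : ℕ} (h : a = b + d) :
    ((a : ℕ) : ZMod (18*k+9)) = ((b : ℕ) : ZMod (18*k+9)) + (d : ZMod (18*k+9)) := by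
  rw [h]; push_cast; ring

lemma cast_eq_wrap (k : ℕ) {a b d : ℕ} (h : a + (18*k+9) = b + d) :
    ((a : ℕ) : ZMod (18*k+9)) = ((b : ℕ) : ZMod (18*k+9)) + (d : ZMod (18*k+9)) := by
  have h2 : ((a : ℕ) : ZMod (18*k+9)) + ((18*k+9 : ℕ) : ZMod (18*k+9))
      = ((b : ℕ) : ZMod (18*k+9)) + ((d : ℕ) : ZMod (18*k+9)) := by
    rw [← Nat.cast_add, h, Nat.cast_add]
  rwa [ZMod.natCast_self, add_zero] at h2

lemma rot_cover (k : ℕ) (p q : Fin (18*k+9)) (x y : Fin 2) (d : ℕ)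
    (hd1 : 1 ≤ d) (hd2 : d ≤ 9*k+4)
    (h1 : d ≠ 2*k+1) (h2 : d ≠ 4*k+2) (h3 : d ≠ 6*k+3) (h4 : d ≠ 8*k+4)
    (hPQ : ((q.val : ℕ) : ZMod (18*k+9)) = ((p.val : ℕ) : ZMod (18*k+9)) + (d : ZMod (18*k+9))) :
    ∃ (J : Fin k) (idx : Fin 4) (t : Fin (18*k+9)) (s : Fin 9) (o : Bool),
      (rBlock k J idx t).quad s o = ((p,q),(x,y)) := by
  have hk : 1 ≤ k := by omega
  rcases (show (d % 2 = 1 ∧ d ≤ 2*k) ∨ (d % 2 = 0 ∧ d ≤ 2*k) ∨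
      (d % 2 = 0 ∧ 2*k+2 ≤ d ∧ d ≤ 4*k) ∨ (d % 2 = 1 ∧ 2*k+3 ≤ d ∧ d ≤ 4*k+1) ∨
      (d % 2 = 1 ∧ 4*k+3 ≤ d ∧ d ≤ 6*k+1) ∨ (d % 2 = 0 ∧ 4*k+4 ≤ d ∧ d ≤ 6*k+2) ∨
      (6*k+4 ≤ d ∧ d ≤ 7*k+3) ∨ (7*k+4 ≤ d ∧ d ≤ 8*k+3) ∨ (8*k+5 ≤ d ∧ d ≤ 9*k+4) from by
        omega)
    with hc | hc | hc | hc | hc | hc | hc | hc | hc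
  · -- digon 1 : d odd ≤ 2k, slots 0/1, idx ∈ {0,1}
    set J : Fin k := ⟨(d+1)/2 - 1, by omega⟩ with hJdef
    have hJ1 : J.val + 1 = (d+1)/2 := by
      rw [hJdef]; show (d+1)/2 - 1 + 1 = (d+1)/2; omega
    have efwd : ∀ idx : Fin 4, idx.val < 2 →
        rb k (J.val+1) idx (slotV 0) = rb k (J.val+1) idx 0 + d := by
      intro idx hi
      rw [show slotV 0 = (1:Fin 9) from rfl, rb_e1A _ _ _ hi, rb_e0A _ _ _ hi, hJ1]; omega
    have erev : ∀ idx : Fin 4, idx.val < 2 →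
        rb k (J.val+1) idx 1 = rb k (J.val+1) idx (slotV 1) + d := by
      intro idx hi
      rw [show slotV 1 = (0:Fin 9) from rfl, rb_e1A _ _ _ hi, rb_e0A _ _ _ hi, hJ1]; omega
    rcases fin2cases x with hx0 | hx0 <;> rcases fin2cases y with hy0 | hy0
    · -- (0,0) : idx 1, slot 0, fwd
      obtain ⟨t, ht⟩ := rot_hit_fwd k (x := x) (y := y) J 1 0 d hPQ (cast_eq_of_nat k (efwd 1 (by decide)))
        (by rw [hx0]; decide) (by rw [hy0]; decide)
      exact ⟨J, 1, t, 0, false, ht⟩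
    · -- (0,1) : idx 0, slot 1, rev
      obtain ⟨t, ht⟩ := rot_hit_rev k (x := x) (y := y) J 0 1 d hPQ (cast_eq_of_nat k (erev 0 (by decide)))
        (by rw [hx0]; decide) (by rw [hy0]; decide)
      exact ⟨J, 0, t, 1, true, ht⟩
    · -- (1,0) : idx 0, slot 0, fwd
      obtain ⟨t, ht⟩ := rot_hit_fwd k (x := x) (y := y) J 0 0 d hPQ (cast_eq_of_nat k (efwd 0 (by decide)))
        (by rw [hx0]; decide) (by rw [hy0]; decide)
      exact ⟨J, 0, t, 0, false, ht⟩
    · -- (1,1) : idx 1, slot 1, rev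
      obtain ⟨t, ht⟩ := rot_hit_rev k (x := x) (y := y) J 1 1 d hPQ (cast_eq_of_nat k (erev 1 (by decide)))
        (by rw [hx0]; decide) (by rw [hy0]; decide)
      exact ⟨J, 1, t, 1, true, ht⟩
  · -- slot 2 fwd : d even ≤ 2k
    set J : Fin k := ⟨d/2 - 1, by omega⟩ with hJdef
    have hJ1 : J.val + 1 = d/2 := by rw [hJdef]; show d/2 - 1 + 1 = d/2; omega
    have e1 : rb k (J.val+1) (![![3,1],![0,2]] x y) (slotV 2)
        = rb k (J.val+1) (![![3,1],![0,2]] x y) 2 + d := by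
      rw [show slotV 2 = (3:Fin 9) from rfl, rb_e3, rb_e2, hJ1]; omega
    have hlab := (show ∀ a b : Fin 2, a = rE (![![3,1],![0,2]] a b) 2 + 1 ∧
        b = rE (![![3,1],![0,2]] a b) (slotV 2) + 0 by decide) x y
    obtain ⟨t, ht⟩ := rot_hit_fwd k J _ 2 d hPQ (cast_eq_of_nat k e1) hlab.1 hlab.2
    exact ⟨J, _, t, 2, false, ht⟩
  · -- slot 5 fwd : d even ∈ [2k+2, 4k]
    set J : Fin k := ⟨(d-2*k)/2 - 1, by omega⟩ with hJdef
    have hJ1 : J.val + 1 = (d-2*k)/2 := by rw [hJdef]; show (d-2*k)/2 - 1 + 1 = (d-2*k)/2; omega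
    have e1 : rb k (J.val+1) (![![3,1],![0,2]] x y) (slotV 5)
        = rb k (J.val+1) (![![3,1],![0,2]] x y) 5 + d := by
      rw [show slotV 5 = (6:Fin 9) from rfl, rb_e6, rb_e5, hJ1]; omega
    have hlab := (show ∀ a b : Fin 2, a = rE (![![3,1],![0,2]] a b) 5 + 1 ∧
        b = rE (![![3,1],![0,2]] a b) (slotV 5) + 0 by decide) x y
    obtain ⟨t, ht⟩ := rot_hit_fwd k J _ 5 d hPQ (cast_eq_of_nat k e1) hlab.1 hlab.2
    exact ⟨J, _, t, 5, false, ht⟩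
  · -- slot 7 rev : d odd ∈ [2k+3, 4k+1]
    set J : Fin k := ⟨(d-2*k-1)/2 - 1, by omega⟩ with hJdef
    have hJ1 : J.val + 1 = (d-2*k-1)/2 := by
      rw [hJdef]; show (d-2*k-1)/2 - 1 + 1 = (d-2*k-1)/2; omega
    have e1 : rb k (J.val+1) (![![3,0],![1,2]] x y) 7
        = rb k (J.val+1) (![![3,0],![1,2]] x y) (slotV 7) + d := by
      rw [show slotV 7 = (8:Fin 9) from rfl, rb_e7, rb_e8, hJ1]; omega
    have hlab := (show ∀ a b : Fin 2, a = rE (![![3,0],![1,2]] a b) (slotV 7) + 0 ∧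
        b = rE (![![3,0],![1,2]] a b) 7 + 1 by decide) x y
    obtain ⟨t, ht⟩ := rot_hit_rev k J _ 7 d hPQ (cast_eq_of_nat k e1) hlab.1 hlab.2
    exact ⟨J, _, t, 7, true, ht⟩
  · -- slot 8 rev : d odd ∈ [4k+3, 6k+1]
    set J : Fin k := ⟨(d-4*k-1)/2 - 1, by omega⟩ with hJdef
    have hJ1 : J.val + 1 = (d-4*k-1)/2 := by
      rw [hJdef]; show (d-4*k-1)/2 - 1 + 1 = (d-4*k-1)/2; omega
    have e1 : rb k (J.val+1) (![![2,0],![1,3]] x y) 8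
        = rb k (J.val+1) (![![2,0],![1,3]] x y) (slotV 8) + d := by
      rw [show slotV 8 = (5:Fin 9) from rfl, rb_e8, rb_e5, hJ1]; omega
    have hlab := (show ∀ a b : Fin 2, a = rE (![![2,0],![1,3]] a b) (slotV 8) + 0 ∧
        b = rE (![![2,0],![1,3]] a b) 8 + 1 by decide) x y
    obtain ⟨t, ht⟩ := rot_hit_rev k J _ 8 d hPQ (cast_eq_of_nat k e1) hlab.1 hlab.2
    exact ⟨J, _, t, 8, true, ht⟩
  · -- slot 6 fwd : d even ∈ [4k+4, 6k+2]
    set J : Fin k := ⟨(d-4*k-2)/2 - 1, by omega⟩ with hJdef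
    have hJ1 : J.val + 1 = (d-4*k-2)/2 := by
      rw [hJdef]; show (d-4*k-2)/2 - 1 + 1 = (d-4*k-2)/2; omega
    have e1 : rb k (J.val+1) (![![2,1],![0,3]] x y) (slotV 6)
        = rb k (J.val+1) (![![2,1],![0,3]] x y) 6 + d := by
      rw [show slotV 6 = (7:Fin 9) from rfl, rb_e7, rb_e6, hJ1]; omega
    have hlab := (show ∀ a b : Fin 2, a = rE (![![2,1],![0,3]] a b) 6 + 1 ∧
        b = rE (![![2,1],![0,3]] a b) (slotV 6) + 0 by decide) x y
    obtain ⟨t, ht⟩ := rot_hit_fwd k J _ 6 d hPQ (cast_eq_of_nat k e1) hlab.1 hlab.2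
    exact ⟨J, _, t, 6, false, ht⟩
  · -- digon 2 : d ∈ [6k+4, 7k+3], slots 0/1, idx ∈ {2,3}
    set J : Fin k := ⟨d - 6*k - 4, by omega⟩ with hJdef
    have hJ1 : J.val + 1 = d - 6*k - 3 := by rw [hJdef]; show d-6*k-4+1 = d-6*k-3; omega
    have efwd : ∀ idx : Fin 4, 2 ≤ idx.val →
        rb k (J.val+1) idx (slotV 0) + (18*k+9) = rb k (J.val+1) idx 0 + d := by
      intro idx hi
      rw [show slotV 0 = (1:Fin 9) from rfl, rb_e1B _ _ _ hi, rb_e0B _ _ _ hi, hJ1]; omega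
    have erev : ∀ idx : Fin 4, 2 ≤ idx.val →
        rb k (J.val+1) idx 1 + (18*k+9) = rb k (J.val+1) idx (slotV 1) + d := by
      intro idx hi
      rw [show slotV 1 = (0:Fin 9) from rfl, rb_e1B _ _ _ hi, rb_e0B _ _ _ hi, hJ1]; omega
    rcases fin2cases x with hx0 | hx0 <;> rcases fin2cases y with hy0 | hy0
    · -- (0,0) : idx 3, slot 0, fwd
      obtain ⟨t, ht⟩ := rot_hit_fwd k (x := x) (y := y) J 3 0 d hPQ (cast_eq_wrap k (efwd 3 (by decide)))
        (by rw [hx0]; decide) (by rw [hy0]; decide)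
      exact ⟨J, 3, t, 0, false, ht⟩
    · -- (0,1) : idx 2, slot 1, rev
      obtain ⟨t, ht⟩ := rot_hit_rev k (x := x) (y := y) J 2 1 d hPQ (cast_eq_wrap k (erev 2 (by decide)))
        (by rw [hx0]; decide) (by rw [hy0]; decide)
      exact ⟨J, 2, t, 1, true, ht⟩
    · -- (1,0) : idx 2, slot 0, fwd
      obtain ⟨t, ht⟩ := rot_hit_fwd k (x := x) (y := y) J 2 0 d hPQ (cast_eq_wrap k (efwd 2 (by decide)))
        (by rw [hx0]; decide) (by rw [hy0]; decide)
      exact ⟨J, 2, t, 0, false, ht⟩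
    · -- (1,1) : idx 3, slot 1, rev
      obtain ⟨t, ht⟩ := rot_hit_rev k (x := x) (y := y) J 3 1 d hPQ (cast_eq_wrap k (erev 3 (by decide)))
        (by rw [hx0]; decide) (by rw [hy0]; decide)
      exact ⟨J, 3, t, 1, true, ht⟩
  · -- slot 3 fwd : d ∈ [7k+4, 8k+3]
    set J : Fin k := ⟨8*k+4-d - 1, by omega⟩ with hJdef
    have hJ1 : J.val + 1 = 8*k+4-d := by rw [hJdef]; show 8*k+4-d-1+1 = 8*k+4-d; omega
    have e1 : rb k (J.val+1) (![![1,2],![0,3]] x y) (slotV 3)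
        = rb k (J.val+1) (![![1,2],![0,3]] x y) 3 + d := by
      rw [show slotV 3 = (4:Fin 9) from rfl, rb_e4, rb_e3, hJ1]; omega
    have hlab := (show ∀ a b : Fin 2, a = rE (![![1,2],![0,3]] a b) 3 + 1 ∧
        b = rE (![![1,2],![0,3]] a b) (slotV 3) + 0 by decide) x y
    obtain ⟨t, ht⟩ := rot_hit_fwd k J _ 3 d hPQ (cast_eq_of_nat k e1) hlab.1 hlab.2
    exact ⟨J, _, t, 3, false, ht⟩
  · -- slot 4 rev : d ∈ [8k+5, 9k+4]
    set J : Fin k := ⟨d - 8*k - 5, by omega⟩ with hJdef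
    have hJ1 : J.val + 1 = d - 8*k - 4 := by rw [hJdef]; show d-8*k-5+1 = d-8*k-4; omega
    have e1 : rb k (J.val+1) (![![2,0],![3,1]] x y) 4
        = rb k (J.val+1) (![![2,0],![3,1]] x y) (slotV 4) + d := by
      rw [show slotV 4 = (2:Fin 9) from rfl, rb_e4, rb_e2, hJ1]; omega
    have hlab := (show ∀ a b : Fin 2, a = rE (![![2,0],![3,1]] a b) (slotV 4) + 0 ∧
        b = rE (![![2,0],![3,1]] a b) 4 + 1 by decide) x y
    obtain ⟨t, ht⟩ := rot_hit_rev k J _ 4 d hPQ (cast_eq_of_nat k e1) hlab.1 hlab.2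
    exact ⟨J, _, t, 4, true, ht⟩

lemma modeq_linear {n a b : ℕ} (h : a ≡ b [MOD n]) (hn : 0 < n) (ha : a < 2*n) (hb : b < n) :
    a = b ∨ a = b + n := by
  unfold Nat.ModEq at h
  rw [Nat.mod_eq_of_lt hb] at h
  rcases Nat.lt_or_ge a n with h1 | h1
  · left; rwa [Nat.mod_eq_of_lt h1] at h
  · right
    rw [Nat.mod_eq_sub_mod h1, Nat.mod_eq_of_lt (by omega)] at h
    omega

lemma cover_exists (k : ℕ) (p q : Fin (18*k+9)) (hpq : p ≠ q) (x y : Fin 2) :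
    (∃ (g : Fin (2*k+1)) (f : Fin 16) (s : Fin 9) (o : Bool),
        (gBlock k g f).quad s o = ((p,q),(x,y))) ∨
    (∃ (J : Fin k) (idx : Fin 4) (t : Fin (18*k+9)) (s : Fin 9) (o : Bool),
        (rBlock k J idx t).quad s o = ((p,q),(x,y))) := by
  have hm : 0 < 2*k+1 := by omega
  have hp9 : p.val < (2*k+1)*9 := by have := p.isLt; omega
  have hq9 : q.val < (2*k+1)*9 := by have := q.isLt; omega
  set ap := p.val / (2*k+1) with hapd
  set gp := p.val % (2*k+1) with hgpd
  set bp := q.val / (2*k+1) with hbpd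
  set gq := q.val % (2*k+1) with hgqd
  have hpdec : (2*k+1) * ap + gp = p.val := Nat.div_add_mod _ _
  have hqdec : (2*k+1) * bp + gq = q.val := Nat.div_add_mod _ _
  have hap : ap < 9 := Nat.div_lt_of_lt_mul (by omega)
  have hbp : bp < 9 := Nat.div_lt_of_lt_mul (by omega)
  have hgp : gp < 2*k+1 := Nat.mod_lt _ hm
  have hgq : gq < 2*k+1 := Nat.mod_lt _ hm
  by_cases hg : gp = gq
  · -- intra-group edge
    left
    have hab : ap ≠ bp := by
      intro hcc
      exact hpq (Fin.ext (by rw [← hpdec, ← hqdec, hcc, hg]))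
    obtain ⟨f, s, hor⟩ := t9_exists ⟨ap, hap⟩ ⟨bp, hbp⟩
      (by simp only [ne_eq, Fin.mk.injEq]; exact hab) x y
    rcases hor with ⟨h1, h2, h3, h4⟩ | ⟨h1, h2, h3, h4⟩
    · refine ⟨⟨gp, hgp⟩, f, s, false, ?_⟩
      have hv1 : (T9C f s).val = ap := by rw [← h1]
      have hv2 : (T9C f (slotV s)).val = bp := by rw [← h2]
      have hc1 : (gBlock k ⟨gp, hgp⟩ f).c s = p := by
        apply Fin.ext; rw [show ((gBlock k ⟨gp, hgp⟩ f).c s).val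
          = gp + (2*k+1) * (T9C f s).val from rfl, hv1]; omega
      have hc2 : (gBlock k ⟨gp, hgp⟩ f).c (slotV s) = q := by
        apply Fin.ext; rw [show ((gBlock k ⟨gp, hgp⟩ f).c (slotV s)).val
          = gp + (2*k+1) * (T9C f (slotV s)).val from rfl, hv2, hg]; omega
      show (((gBlock k ⟨gp, hgp⟩ f).c s, (gBlock k ⟨gp, hgp⟩ f).c (slotV s)),
          (T9E f s + 1, T9E f (slotV s) + 0)) = ((p,q),(x,y))
      rw [hc1, hc2, h3, h4]
    · refine ⟨⟨gp, hgp⟩, f, s, true, ?_⟩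
      have hv1 : (T9C f s).val = bp := by rw [← h1]
      have hv2 : (T9C f (slotV s)).val = ap := by rw [← h2]
      have hc1 : (gBlock k ⟨gp, hgp⟩ f).c (slotV s) = p := by
        apply Fin.ext; rw [show ((gBlock k ⟨gp, hgp⟩ f).c (slotV s)).val
          = gp + (2*k+1) * (T9C f (slotV s)).val from rfl, hv2]; omega
      have hc2 : (gBlock k ⟨gp, hgp⟩ f).c s = q := by
        apply Fin.ext; rw [show ((gBlock k ⟨gp, hgp⟩ f).c s).val
          = gp + (2*k+1) * (T9C f s).val from rfl, hv1, hg]; omega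
      show (((gBlock k ⟨gp, hgp⟩ f).c (slotV s), (gBlock k ⟨gp, hgp⟩ f).c s),
          (T9E f (slotV s) + 0, T9E f s + 1)) = ((p,q),(x,y))
      rw [hc1, hc2, h3, h4]
  · -- inter-group edge
    right
    set P : ZMod (18*k+9) := ((p.val : ℕ) : ZMod (18*k+9)) with hPdef
    set Q : ZMod (18*k+9) := ((q.val : ℕ) : ZMod (18*k+9)) with hQdef
    have hPQne : P ≠ Q := by
      intro hc
      exact hpq (Fin.ext (by
        have := congrArg ZMod.val hc
        rwa [hPdef, hQdef, ZMod.val_cast_of_lt p.isLt, ZMod.val_cast_of_lt q.isLt] at this))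
    set d0 := (Q - P).val with hd0def
    have hd0lt : d0 < 18*k+9 := ZMod.val_lt _
    have hd0pos : 1 ≤ d0 := by
      rcases Nat.eq_zero_or_pos d0 with h0 | h0
      · exfalso
        have : Q - P = 0 := by
          have := (ZMod.val_eq_zero _).mp h0
          exact this
        exact hPQne (sub_eq_zero.mp this).symm
      · exact h0
    have hQP : Q = P + (d0 : ZMod (18*k+9)) := by
      rw [hd0def, cast_val_hop]; ring
    -- q.val ≡ p.val + d0 [MOD 18k+9]
    have hmodeq : p.val + d0 ≡ q.val [MOD 18*k+9] := by
      have : ((p.val + d0 : ℕ) : ZMod (18*k+9)) = ((q.val : ℕ) : ZMod (18*k+9)) := by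
        rw [Nat.cast_add, ← hPdef, ← hQdef, hQP]
      exact (ZMod.natCast_eq_natCast_iff _ _ _).mp this
    have hlin : p.val + d0 = q.val ∨ p.val + d0 = q.val + (18*k+9) :=
      modeq_linear hmodeq (by omega) (by omega) q.isLt
    -- d0 is not a multiple of 2k+1
    have hnd : ∀ c : ℕ, 1 ≤ c → c ≤ 8 → d0 ≠ c*(2*k+1) := by
      intro c hc1 hc2 hceq
      apply hg
      rcases hlin with he | he
      · have : q.val % (2*k+1) = (p.val + c*(2*k+1)) % (2*k+1) := by rw [← hceq, he]
        rw [Nat.add_mul_mod_self_right] at this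
        rw [hgpd, hgqd, this]
      · have h9m : q.val + (18*k+9) = q.val + 9*(2*k+1) := by ring_nf
        have : (p.val + c*(2*k+1)) % (2*k+1) = (q.val + 9*(2*k+1)) % (2*k+1) := by
          rw [← hceq, he, h9m]
        rw [Nat.add_mul_mod_self_right, Nat.add_mul_mod_self_right] at this
        rw [hgpd, hgqd, this]
    rcases le_or_gt d0 (9*k+4) with hfold | hfold
    · -- forward orientation
      have := rot_cover k p q x y d0 hd0pos hfold
        (by have := hnd 1 (by norm_num) (by norm_num); omega)
        (by have := hnd 2 (by norm_num) (by norm_num); omega)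
        (by have := hnd 3 (by norm_num) (by norm_num); omega)
        (by have := hnd 4 (by norm_num) (by norm_num); omega)
        (by rw [← hPdef, ← hQdef]; exact hQP)
      obtain ⟨J, idx, t, s, o, ht⟩ := this
      exact ⟨J, idx, t, s, o, ht⟩
    · -- swapped orientation
      set d1 := 18*k+9 - d0 with hd1def
      have hPQ' : ((p.val : ℕ) : ZMod (18*k+9)) = ((q.val : ℕ) : ZMod (18*k+9))
          + (d1 : ZMod (18*k+9)) := by
        have hcast : ((d1 : ℕ) : ZMod (18*k+9)) = - ((d0 : ℕ) : ZMod (18*k+9)) := by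
          rw [hd1def, Nat.cast_sub (by omega), ZMod.natCast_self]; ring
        rw [← hPdef, ← hQdef, hcast, hQP]; ring
      have := rot_cover k q p y x d1 (by omega) (by omega)
        (by have := hnd 8 (by norm_num) (by norm_num); omega)
        (by have := hnd 7 (by norm_num) (by norm_num); omega)
        (by have := hnd 6 (by norm_num) (by norm_num); omega)
        (by have := hnd 5 (by norm_num) (by norm_num); omega)
        hPQ'
      obtain ⟨J, idx, t, s, o, ht⟩ := this
      exact ⟨J, idx, t, s, !o, (rBlock k J idx t).quad_flip s o ht⟩

abbrev IdxT (k : ℕ) : Type :=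
  (Fin (2*k+1) × Fin 16) ⊕ ((Fin k × Fin 4) × Fin (18*k+9))

def blockOf (k : ℕ) : IdxT k → HB (18*k+9) :=
  Sum.elim (fun z => gBlock k z.1 z.2) (fun z => rBlock k z.1.1 z.1.2 z.2)

def ψmap (k : ℕ) (a : IdxT k × Fin 9 × Bool) :
    (Fin (18*k+9) × Fin (18*k+9)) × (Fin 2 × Fin 2) :=
  (blockOf k a.1).quad a.2.1 a.2.2

lemma slotV_ne : ∀ s : Fin 9, slotV s ≠ s := by decide

lemma HB.quad_ne (b : HB n) (s : Fin 9) (o : Bool) :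
    (b.quad s o).1.1 ≠ (b.quad s o).1.2 := by
  have hs := slotV_ne s
  cases o
  · show b.c s ≠ b.c (slotV s)
    intro h; exact hs (b.inj h.symm)
  · show b.c (slotV s) ≠ b.c s
    intro h; exact hs (b.inj h)

def TgtF (k : ℕ) : Finset ((Fin (18*k+9) × Fin (18*k+9)) × (Fin 2 × Fin 2)) :=
  (Finset.univ : Finset (Fin (18*k+9))).offDiag ×ˢ Finset.univ

lemma psi_mem (k : ℕ) (a : IdxT k × Fin 9 × Bool) : ψmap k a ∈ TgtF k := by
  rw [TgtF, Finset.mem_product]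
  exact ⟨Finset.mem_offDiag.mpr ⟨Finset.mem_univ _, Finset.mem_univ _,
    (blockOf k a.1).quad_ne a.2.1 a.2.2⟩, Finset.mem_univ _⟩

lemma psi_surj (k : ℕ) (z : (Fin (18*k+9) × Fin (18*k+9)) × (Fin 2 × Fin 2))
    (hz : z ∈ TgtF k) : ∃ a : IdxT k × Fin 9 × Bool, ψmap k a = z := by
  obtain ⟨⟨p, q⟩, x, y⟩ := z
  rw [TgtF, Finset.mem_product] at hz
  have hpq : p ≠ q := (Finset.mem_offDiag.mp hz.1).2.2
  rcases cover_exists k p q hpq x y with ⟨g, f, s, o, h⟩ | ⟨J, idx, t, s, o, h⟩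
  · exact ⟨(Sum.inl (g, f), s, o), h⟩
  · exact ⟨(Sum.inr ((J, idx), t), s, o), h⟩

lemma card_eq_aux (k : ℕ) :
    Fintype.card (IdxT k × Fin 9 × Bool) ≤ (TgtF k).card := by
  rw [TgtF, Finset.card_product, Finset.offDiag_card]
  simp only [Finset.card_univ, Fintype.card_prod, Fintype.card_sum, Fintype.card_fin,
    Fintype.card_bool]
  have e1 : (18*k+9) * (18*k+9) = (18*k+9) * (18*k+8) + (18*k+9) := by ring
  have e2 : ((2*k+1) * 16 + k * 4 * (18*k+9)) * (9 * 2) = (18*k+9) * (18*k+8) * 4 := by ring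
  omega

lemma psi_injOn (k : ℕ) (a₁ a₂ : IdxT k × Fin 9 × Bool) (h : ψmap k a₁ = ψmap k a₂) :
    a₁ = a₂ := by
  classical
  exact Finset.inj_on_of_surj_on_of_card_le (s := Finset.univ) (t := TgtF k)
    (fun a _ => ψmap k a)
    (fun a _ => psi_mem k a)
    (fun b hb => by obtain ⟨a, ha⟩ := psi_surj k b hb; exact ⟨a, Finset.mem_univ a, ha⟩)
    (by rw [Finset.card_univ]; exact card_eq_aux k)
    (Finset.mem_univ a₁) (Finset.mem_univ a₂) h

lemma key_existsUnique (k : ℕ) (p q : Fin (18*k+9)) (hpq : p ≠ q) (x y : Fin 2) :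
    ∃! i : IdxT k, ∃ (s : Fin 9) (o : Bool), (blockOf k i).quad s o = ((p,q),(x,y)) := by
  have hz : (((p,q),(x,y)) : (Fin (18*k+9) × Fin (18*k+9)) × (Fin 2 × Fin 2)) ∈ TgtF k := by
    unfold TgtF
    refine Finset.mem_product.mpr ⟨?_, Finset.mem_univ _⟩
    exact Finset.mem_offDiag.mpr ⟨Finset.mem_univ _, Finset.mem_univ _, hpq⟩
  have hex := psi_surj k ((p,q),(x,y)) hz
  obtain ⟨⟨i, s, o⟩, ha⟩ := hex
  have ha2 : (blockOf k i).quad s o = ((p,q),(x,y)) := ha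
  refine ⟨i, ⟨s, o, ha2⟩, ?_⟩
  rintro i' ⟨s', o', ha'⟩
  have := psi_injOn k (i', s', o') (i, s, o)
    (by show (blockOf k i').quad s' o' = (blockOf k i).quad s o; rw [ha', ha2])
  exact (congrArg Prod.fst this)

lemma fin2succ : ∀ x y : Fin 2, x ≠ y → y = x + 1 := by decide

end HOPAux

open HOPAux

/-- Lemma 6.7: for `k ≥ 0`, `n = 18k + 9` and `s = n - 9`,
`HOP(2^⟨s⟩, 4, 6, 8)` has a solution. -/
theorem hop_C2_C3_C4_mod_nine (k n s : ℕ) (hn : n = 18 * k + 9) (hs : s = n - 9) :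
    HOPSolution n s 3 ![2, 3, 4] := by
  subst hn
  subst hs
  refine ⟨Fintype.card (IdxT k), ?_, ?_⟩
  · have hsum : ∑ i, (![2,3,4] : Fin 3 → ℕ) i = 9 := by
      norm_num [Fin.sum_univ_three]
      rfl
    have hcard : Fintype.card (IdxT k) = (2*k+1)*16 + k*4*(18*k+9) := by
      simp [Fintype.card_sum, Fintype.card_prod, Fintype.card_fin]
    have h1 : 18*k+9-1 = 18*k+8 := by omega
    rw [hsum, hcard, h1]; ring
  · have e9 : (9:ℕ) ≤ 18*k+9 := by omega
    set e := (Fintype.equivFin (IdxT k)).symm with hedef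
    refine ⟨fun r => (blockOf k (e r)).toFactor e9, ?_⟩
    intro e0 hdiag hI
    induction e0 using Sym2.ind with
    | _ u v =>
      obtain ⟨p, x⟩ := u
      obtain ⟨q, y⟩ := v
      have huv : ((p,x) : HOPVertex (18*k+9)) ≠ (q,y) := fun hc =>
        hdiag (Sym2.mk_isDiag_iff.mpr hc)
      have hpq : p ≠ q := by
        intro hc
        subst hc
        have hxy : x ≠ y := fun hc2 => huv (by rw [hc2])
        exact hI ⟨(p,x), by rw [fin2succ x y hxy]; rfl⟩
      obtain ⟨i0, hi0, hiu⟩ := key_existsUnique k p q hpq x y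
      refine ⟨e.symm i0, ?_, ?_⟩
      · show s(((p,x) : HOPVertex (18*k+9)), (q,y)) ∈
          ((blockOf k (e (e.symm i0))).toFactor e9).edges
        rw [Equiv.apply_symm_apply]
        rw [(blockOf k i0).mem_edges_iff e9 hpq]
        obtain ⟨s, o, hso⟩ := hi0
        exact ⟨s, ((blockOf k i0).sym2_eq_iff_quad s).mpr ⟨o, hso⟩⟩
      · intro r hr
        have hr2 : s(((p,x) : HOPVertex (18*k+9)), (q,y)) ∈
            ((blockOf k (e r)).toFactor e9).edges := hr
        rw [(blockOf k (e r)).mem_edges_iff e9 hpq] at hr2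
        obtain ⟨s, hs⟩ := hr2
        obtain ⟨o, ho⟩ := ((blockOf k (e r)).sym2_eq_iff_quad s).mp hs
        have her : e r = i0 := hiu (e r) ⟨s, o, ho⟩
        have := congrArg e.symm her
        rwa [Equiv.symm_apply_apply] at this
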